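/- Suppose the Orlicz integrand $\varphi$ satisfies the $\Delta_2$-condition: for every set $A$ that is a countable union of atoms and a $\sigma$-finite set, and every separable $S \subset X$, there exist $k \ge 1$ and $f \in L_1(\mu)$ with $\varphi(\omega, 2x) \le k\varphi(\omega, x) + f(\omega)$ for all $x \in S$ and a.e. $\omega \in A$. Then $\dom I_\varphi$ is linear, and consequently $L_\varphi(\mu) = C_\varphi^\sigma(\mu)$. -/

import Mathlib

open MeasureTheory Filter Topology ENNReal

/-- An Orlicz integrand `φ : Ω × X → [0,∞]`: for a.e. `ω` the partial map `φ ω` is an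
Orlicz function (even, convex, lsc, proper, vanishing continuously at the origin and
tending to `∞` at infinity), and `φ` is measurable in the sense that its composition
with any strongly measurable function is measurable. -/
structure IsOrliczIntegrand {Ω X : Type*} [MeasurableSpace Ω]
    [NormedAddCommGroup X] [NormedSpace ℝ X]
    (μ : Measure Ω) (φ : Ω → X → ℝ≥0∞) : Prop where
  ae_even : ∀ᵐ ω ∂μ, ∀ x : X, φ ω (-x) = φ ω x
  ae_convex : ∀ᵐ ω ∂μ, ∀ x y : X, ∀ a b : ℝ, 0 ≤ a → 0 ≤ b → a + b = 1 →
    φ ω (a • x + b • y) ≤ ENNReal.ofReal a * φ ω x + ENNReal.ofReal b * φ ω y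
  ae_lsc : ∀ᵐ ω ∂μ, LowerSemicontinuous (φ ω)
  ae_proper : ∀ᵐ ω ∂μ, ∃ x, φ ω x ≠ ⊤
  ae_zero : ∀ᵐ ω ∂μ, Tendsto (φ ω) (nhds 0) (nhds 0)
  ae_coercive : ∀ᵐ ω ∂μ, Tendsto (φ ω) (Filter.comap norm Filter.atTop) (nhds ⊤)
  meas_comp : ∀ u : Ω → X, StronglyMeasurable u → Measurable fun ω => φ ω (u ω)

/-- The Orlicz modular `I_φ(u) = ∫ φ(ω, u(ω)) dμ(ω)`. -/
noncomputable def orliczModular {Ω X : Type*} [MeasurableSpace Ω]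
    (μ : Measure Ω) (φ : Ω → X → ℝ≥0∞) (u : Ω → X) : ℝ≥0∞ :=
  ∫⁻ ω, φ ω (u ω) ∂μ

/-- The Luxemburg norm `‖u‖_φ = inf {α > 0 : I_φ(u/α) ≤ 1}`. -/
noncomputable def luxNorm {Ω X : Type*} [MeasurableSpace Ω]
    [NormedAddCommGroup X] [NormedSpace ℝ X]
    (μ : Measure Ω) (φ : Ω → X → ℝ≥0∞) (u : Ω → X) : ℝ≥0∞ :=
  ⨅ a : {a : ℝ // 0 < a ∧ orliczModular μ φ (fun ω => a⁻¹ • u ω) ≤ 1},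
    ENNReal.ofReal a

/-- Membership in the Orlicz space `L_φ(μ)`: strongly measurable with finite
Luxemburg norm. -/
def MemOrlicz {Ω X : Type*} [MeasurableSpace Ω]
    [NormedAddCommGroup X] [NormedSpace ℝ X]
    (μ : Measure Ω) (φ : Ω → X → ℝ≥0∞) (u : Ω → X) : Prop :=
  StronglyMeasurable u ∧ luxNorm μ φ u < ⊤

/-- The Amemiya norm `⦀u⦀_φ = inf_{α>0} α⁻¹ (1 + I_φ(α u))`. -/
noncomputable def amemiyaNorm {Ω X : Type*} [MeasurableSpace Ω]
    [NormedAddCommGroup X] [NormedSpace ℝ X]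
    (μ : Measure Ω) (φ : Ω → X → ℝ≥0∞) (u : Ω → X) : ℝ≥0∞ :=
  ⨅ a : {a : ℝ // 0 < a},
    ENNReal.ofReal (a : ℝ)⁻¹ * (1 + orliczModular μ φ (fun ω => (a : ℝ) • u ω))

/-- A function is σ-finitely concentrated if it vanishes (a.e.) outside a σ-finite
measurable set. -/
def SigmaFiniteConc {Ω X : Type*} [MeasurableSpace Ω] [Zero X]
    (μ : MeasureTheory.Measure Ω) (u : Ω → X) : Prop :=
  ∃ S : Set Ω, MeasurableSet S ∧
    (∃ g : ℕ → Set Ω, S = ⋃ n, g n ∧ ∀ n, MeasurableSet (g n) ∧ μ (g n) < ⊤) ∧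
    ∀ᵐ ω ∂μ, ω ∉ S → u ω = 0

/-- `u` has absolutely continuous norm: `‖u χ_{E_n}‖_φ → 0` for every sequence of
measurable sets with `χ_{E_n} → 0` a.e. -/
def AbsContNorm {Ω X : Type*} [MeasurableSpace Ω]
    [NormedAddCommGroup X] [NormedSpace ℝ X]
    (μ : MeasureTheory.Measure Ω) (φ : Ω → X → ℝ≥0∞) (u : Ω → X) : Prop :=
  ∀ E : ℕ → Set Ω, (∀ n, MeasurableSet (E n)) →
    (∀ᵐ ω ∂μ, ∀ᶠ n in Filter.atTop, ω ∉ E n) →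
    Filter.Tendsto (fun n => luxNorm μ φ ((E n).indicator u)) Filter.atTop (nhds 0)

/-- A μ-atom: a measurable set of positive measure whose measurable subsets have
measure `0` or full measure. -/
def IsMuAtom {Ω : Type*} [MeasurableSpace Ω] (μ : MeasureTheory.Measure Ω)
    (A : Set Ω) : Prop :=
  MeasurableSet A ∧ 0 < μ A ∧ ∀ B ⊆ A, MeasurableSet B → μ B = 0 ∨ μ B = μ A

/-- A set that is a countable union of μ-atoms and sets of finite measure
(i.e. a union of countably many atoms and a σ-finite set). -/
def MemAaSigma {Ω : Type*} [MeasurableSpace Ω] (μ : MeasureTheory.Measure Ω)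
    (A : Set Ω) : Prop :=
  ∃ g : ℕ → Set Ω, A = ⋃ n, g n ∧
    ∀ n, MeasurableSet (g n) ∧ (μ (g n) < ⊤ ∨ IsMuAtom μ (g n))
set_option linter.unusedSectionVars false
section Aux
variable {Ω X : Type*} [MeasurableSpace Ω] [NormedAddCommGroup X] [NormedSpace ℝ X]
variable {μ : MeasureTheory.Measure Ω} {φ : Ω → X → ℝ≥0∞}

/-- A σ-finite measurable set (decomposition as in `SigmaFiniteConc`). -/
def SigmaFinSet (μ : MeasureTheory.Measure Ω) (S : Set Ω) : Prop :=
  ∃ g : ℕ → Set Ω, S = ⋃ n, g n ∧ ∀ n, MeasurableSet (g n) ∧ μ (g n) < ⊤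

lemma SigmaFinSet.measurableSet {S : Set Ω} (h : SigmaFinSet μ S) : MeasurableSet S := by
  obtain ⟨g, rfl, hg⟩ := h
  exact MeasurableSet.iUnion fun n => (hg n).1

lemma sigmaFinSet_empty : SigmaFinSet μ (∅ : Set Ω) :=
  ⟨fun _ => ∅, by simp, fun _ => ⟨MeasurableSet.empty, by simp⟩⟩

lemma sigmaFinSet_of_finite {S : Set Ω} (hm : MeasurableSet S) (hf : μ S < ⊤) :
    SigmaFinSet μ S :=
  ⟨fun _ => S, (Set.iUnion_const S).symm, fun _ => ⟨hm, hf⟩⟩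

lemma sigmaFinSet_iUnion {S : ℕ → Set Ω} (h : ∀ n, SigmaFinSet μ (S n)) :
    SigmaFinSet μ (⋃ n, S n) := by
  choose g hg hgm using h
  refine ⟨fun n => g (Nat.unpair n).1 (Nat.unpair n).2, ?_, fun n => hgm _ _⟩
  rw [Set.iUnion_unpair (fun i j => g i j)]
  exact Set.iUnion_congr hg

lemma SigmaFinSet.union {S T : Set Ω} (hS : SigmaFinSet μ S) (hT : SigmaFinSet μ T) :
    SigmaFinSet μ (S ∪ T) := by
  have : S ∪ T = ⋃ n : ℕ, (if n = 0 then S else T) := by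
    ext x; simp only [Set.mem_union, Set.mem_iUnion]
    constructor
    · rintro (h | h)
      · exact ⟨0, by simpa⟩
      · exact ⟨1, by simpa⟩
    · rintro ⟨n, h⟩
      by_cases hn : n = 0
      · left; simpa [hn] using h
      · right; simpa [hn] using h
  rw [this]
  exact sigmaFinSet_iUnion fun n => by by_cases hn : n = 0 <;> simp [hn, hS, hT]

lemma SigmaFinSet.memAaSigma {S : Set Ω} (h : SigmaFinSet μ S) : MemAaSigma μ S := by
  obtain ⟨g, rfl, hg⟩ := h
  exact ⟨g, rfl, fun n => ⟨(hg n).1, Or.inl (hg n).2⟩⟩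

end Aux
section Aux2
open MeasureTheory Filter Topology ENNReal
variable {Ω X : Type*} [MeasurableSpace Ω] [NormedAddCommGroup X] [NormedSpace ℝ X]
variable {μ : Measure Ω} {φ : Ω → X → ℝ≥0∞}

lemma ae_phi_zero (hφ : IsOrliczIntegrand μ φ) : ∀ᵐ ω ∂μ, φ ω 0 = 0 := by
  filter_upwards [hφ.ae_zero] with ω hz
  have h1 : Tendsto (fun _ : ℕ => φ ω 0) atTop (𝓝 0) := by
    have : Tendsto (fun _ : ℕ => (0 : X)) atTop (𝓝 (0 : X)) := tendsto_const_nhds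
    exact hz.comp this
  exact tendsto_nhds_unique tendsto_const_nhds h1

lemma ae_phi_contract (hφ : IsOrliczIntegrand μ φ) :
    ∀ᵐ ω ∂μ, ∀ (c : ℝ) (x : X), |c| ≤ 1 → φ ω (c • x) ≤ φ ω x := by
  filter_upwards [hφ.ae_even, hφ.ae_convex, ae_phi_zero hφ] with ω he hc h0 c x hc1
  have key : ∀ t : ℝ, 0 ≤ t → t ≤ 1 → φ ω (t • x) ≤ φ ω x := by
    intro t ht0 ht1
    have h := hc x 0 t (1 - t) ht0 (by linarith) (by ring)
    rw [smul_zero, add_zero, h0, mul_zero, add_zero] at h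
    calc φ ω (t • x) ≤ ENNReal.ofReal t * φ ω x := h
    _ ≤ 1 * φ ω x := by
        gcongr
        exact ENNReal.ofReal_le_one.mpr ht1
    _ = φ ω x := one_mul _
  rcases le_or_gt 0 c with h | h
  · exact key c h (by rwa [abs_of_nonneg h] at hc1)
  · have : c • x = -((-c) • x) := by rw [neg_smul, neg_neg]
    rw [this, he]
    exact key (-c) (by linarith) (by rwa [abs_of_neg h] at hc1)

end Aux2
section Aux3
open MeasureTheory Filter Topology ENNReal
variable {Ω X : Type*} [MeasurableSpace Ω] [NormedAddCommGroup X] [NormedSpace ℝ X]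
variable {μ : Measure Ω} {φ : Ω → X → ℝ≥0∞}

/-- The `Δ₂`-defect sequence: `d_k(ω) = sup_j (φ(ω, 2^{j+1} u ω) - k φ(ω, 2^j u ω))`. -/
noncomputable def dSeq (φ : Ω → X → ℝ≥0∞) (u : Ω → X) (k : ℕ) (ω : Ω) : ℝ≥0∞ :=
  ⨆ j : ℕ, φ ω ((2 ^ (j + 1) : ℝ) • u ω) - (k : ℝ≥0∞) * φ ω ((2 ^ j : ℝ) • u ω)

lemma dSeq_measurable (hφ : IsOrliczIntegrand μ φ) {u : Ω → X}
    (hu : StronglyMeasurable u) (k : ℕ) : Measurable (dSeq φ u k) := by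
  apply Measurable.iSup
  intro j
  have h1 : Measurable fun ω => φ ω ((2 ^ (j + 1) : ℝ) • u ω) :=
    hφ.meas_comp _ (hu.const_smul ((2 : ℝ) ^ (j + 1)))
  have h2 : Measurable fun ω => φ ω ((2 ^ j : ℝ) • u ω) :=
    hφ.meas_comp _ (hu.const_smul ((2 : ℝ) ^ j))
  exact h1.sub (h2.const_mul _)

lemma dSeq_antitone {u : Ω → X} {k k' : ℕ} (h : k ≤ k') (ω : Ω) :
    dSeq φ u k' ω ≤ dSeq φ u k ω := by
  apply iSup_mono
  intro j
  exact tsub_le_tsub_left (mul_le_mul_left (Nat.cast_le.mpr h) _) _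

lemma ae_dSeq_pos (hφ : IsOrliczIntegrand μ φ) (u : Ω → X) :
    ∀ᵐ ω ∂μ, (φ ω (u ω) = 0 ∧ u ω ≠ 0) → ∀ k : ℕ, 0 < dSeq φ u k ω := by
  filter_upwards [hφ.ae_coercive] with ω hcoer hB k
  by_contra hd
  push_neg at hd
  have hd0 : dSeq φ u k ω = 0 := le_antisymm hd zero_le
  unfold dSeq at hd0
  have hstep : ∀ j : ℕ, φ ω ((2 ^ (j + 1) : ℝ) • u ω) ≤ (k : ℝ≥0∞) * φ ω ((2 ^ j : ℝ) • u ω) :=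
    fun j => tsub_eq_zero_iff_le.mp (iSup_eq_zero.mp hd0 j)
  have hall : ∀ j : ℕ, φ ω ((2 ^ j : ℝ) • u ω) = 0 := by
    intro j
    induction j with
    | zero => simpa using hB.1
    | succ m ih => exact le_antisymm (by simpa [ih] using hstep m) zero_le
  -- coercivity contradiction
  have hnorm : Tendsto (fun j : ℕ => ‖(2 ^ j : ℝ) • u ω‖) atTop atTop := by
    have h2 : Tendsto (fun j : ℕ => (2 : ℝ) ^ j) atTop atTop :=
      tendsto_pow_atTop_atTop_of_one_lt one_lt_two
    have := h2.atTop_mul_const (norm_pos_iff.mpr hB.2)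
    refine this.congr fun j => ?_
    rw [norm_smul, Real.norm_eq_abs, abs_of_pos (by positivity)]
  have htend : Tendsto (fun j : ℕ => φ ω ((2 ^ j : ℝ) • u ω)) atTop (𝓝 ⊤) :=
    hcoer.comp (tendsto_comap_iff.mpr hnorm)
  have h0 : Tendsto (fun _ : ℕ => (0 : ℝ≥0∞)) atTop (𝓝 ⊤) :=
    htend.congr hall
  exact (by simp : (⊤ : ℝ≥0∞) ≠ 0) (tendsto_nhds_unique h0 tendsto_const_nhds)

end Aux3
section Aux4
open MeasureTheory Filter Topology ENNReal
variable {Ω X : Type*} [MeasurableSpace Ω] [NormedAddCommGroup X] [NormedSpace ℝ X]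
variable {μ : Measure Ω} {φ : Ω → X → ℝ≥0∞}

lemma dSeq_bound (hφ : IsOrliczIntegrand μ φ)
    (hΔ2 : ∀ A : Set Ω, MemAaSigma μ A → ∀ S : Set X, TopologicalSpace.IsSeparable S →
      ∃ (k : ℝ) (f : Ω → ℝ≥0∞), 1 ≤ k ∧ Measurable f ∧ (∫⁻ ω, f ω ∂μ) < ⊤ ∧
        ∀ᵐ ω ∂μ, ω ∈ A → ∀ x ∈ S,
          φ ω ((2 : ℝ) • x) ≤ ENNReal.ofReal k * φ ω x + f ω)
    {u : Ω → X} (hu : StronglyMeasurable u) (A : Set Ω) (hA : MemAaSigma μ A) :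
    ∃ (K : ℕ) (f : Ω → ℝ≥0∞), Measurable f ∧ (∫⁻ ω, f ω ∂μ) < ⊤ ∧
      ∀ᵐ ω ∂μ, ω ∈ A → dSeq φ u K ω ≤ f ω := by
  set SX : Set X := ⋃ j : ℕ, Set.range (fun ω => (2 ^ j : ℝ) • u ω) with hSX
  have hsep : TopologicalSpace.IsSeparable SX :=
    TopologicalSpace.IsSeparable.iUnion fun j =>
      ((hu.const_smul ((2:ℝ) ^ j)) : StronglyMeasurable fun ω => (2 ^ j : ℝ) • u ω).isSeparable_range
  obtain ⟨k, f, hk1, hfm, hfi, hb⟩ := hΔ2 A hA SX hsep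
  refine ⟨⌈k⌉₊, f, hfm, hfi, ?_⟩
  filter_upwards [hb] with ω hω hmem
  apply iSup_le
  intro j
  rw [tsub_le_iff_right]
  have hx : (2 ^ j : ℝ) • u ω ∈ SX := Set.mem_iUnion.mpr ⟨j, Set.mem_range_self ω⟩
  have h1 := hω hmem _ hx
  have h2 : (2 : ℝ) • ((2 ^ j : ℝ) • u ω) = (2 ^ (j + 1) : ℝ) • u ω := by
    rw [smul_smul, ← pow_succ']
  rw [h2] at h1
  have h3 : ENNReal.ofReal k ≤ (⌈k⌉₊ : ℝ≥0∞) := by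
    rw [← ENNReal.ofReal_natCast]
    exact ENNReal.ofReal_le_ofReal (Nat.le_ceil k)
  calc φ ω ((2 ^ (j + 1) : ℝ) • u ω) ≤ ENNReal.ofReal k * φ ω ((2 ^ j : ℝ) • u ω) + f ω := h1
  _ ≤ (⌈k⌉₊ : ℝ≥0∞) * φ ω ((2 ^ j : ℝ) • u ω) + f ω := by gcongr
  _ = f ω + (⌈k⌉₊ : ℝ≥0∞) * φ ω ((2 ^ j : ℝ) • u ω) := add_comm _ _

end Aux4
section Aux5
open MeasureTheory Filter Topology ENNReal
variable {Ω X : Type*} [MeasurableSpace Ω] [NormedAddCommGroup X] [NormedSpace ℝ X]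
variable {μ : Measure Ω} {φ : Ω → X → ℝ≥0∞}

lemma weird_null (hφ : IsOrliczIntegrand μ φ)
    (hΔ2 : ∀ A : Set Ω, MemAaSigma μ A → ∀ S : Set X, TopologicalSpace.IsSeparable S →
      ∃ (k : ℝ) (f : Ω → ℝ≥0∞), 1 ≤ k ∧ Measurable f ∧ (∫⁻ ω, f ω ∂μ) < ⊤ ∧
        ∀ᵐ ω ∂μ, ω ∈ A → ∀ x ∈ S,
          φ ω ((2 : ℝ) • x) ≤ ENNReal.ofReal k * φ ω x + f ω)
    {u : Ω → X} (hu : StronglyMeasurable u) {R : Set Ω} (hRm : MeasurableSet R)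
    (hRB : ∀ ω ∈ R, φ ω (u ω) = 0 ∧ u ω ≠ 0)
    (hR01 : ∀ E, E ⊆ R → MeasurableSet E → μ E = 0 ∨ μ E = ⊤) : μ R = 0 := by
  by_contra hR0
  have hmemaa : MemAaSigma μ R := by
    refine ⟨fun _ => R, (Set.iUnion_const R).symm, fun _ => ⟨hRm, Or.inr ?_⟩⟩
    refine ⟨hRm, pos_iff_ne_zero.mpr hR0, fun B hB hBm => ?_⟩
    rcases hR01 B hB hBm with h | h
    · exact Or.inl h
    · exact Or.inr (h.trans ((hR01 R subset_rfl hRm).resolve_left hR0).symm)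
  obtain ⟨K, f, hfm, hfi, hae⟩ := dSeq_bound hφ hΔ2 hu R hmemaa
  -- `f = 0` a.e. on `R`
  have hfz : ∀ n : ℕ, μ (R ∩ {ω | ((n : ℝ≥0∞) + 1)⁻¹ ≤ f ω}) = 0 := by
    intro n
    have hEm : MeasurableSet (R ∩ {ω | ((n : ℝ≥0∞) + 1)⁻¹ ≤ f ω}) :=
      hRm.inter (hfm measurableSet_Ici)
    rcases hR01 _ Set.inter_subset_left hEm with h | h
    · exact h
    · exfalso
      have h1 : ((n : ℝ≥0∞) + 1)⁻¹ * μ {ω | ((n : ℝ≥0∞) + 1)⁻¹ ≤ f ω} ≤ ∫⁻ ω, f ω ∂μ :=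
        mul_meas_ge_le_lintegral hfm _
      have h2 : μ {ω | ((n : ℝ≥0∞) + 1)⁻¹ ≤ f ω} = ⊤ :=
        top_le_iff.mp (h ▸ measure_mono Set.inter_subset_right)
      rw [h2, ENNReal.mul_top (ENNReal.inv_ne_zero.mpr (by simp))] at h1
      exact absurd (top_le_iff.mp h1) (by simpa using hfi.ne)
  have hf0 : ∀ᵐ ω ∂μ, ω ∈ R → f ω = 0 := by
    have hsub : {ω | ¬(ω ∈ R → f ω = 0)} ⊆ ⋃ n : ℕ, R ∩ {ω | ((n : ℝ≥0∞) + 1)⁻¹ ≤ f ω} := by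
      intro ω hω
      simp only [Set.mem_setOf_eq, _root_.not_imp] at hω
      obtain ⟨m, hm⟩ := ENNReal.exists_inv_nat_lt hω.2
      refine Set.mem_iUnion.mpr ⟨m, hω.1, ?_⟩
      exact le_trans (ENNReal.inv_le_inv.mpr (le_add_of_nonneg_right zero_le_one)) hm.le
    exact measure_mono_null hsub (measure_iUnion_null hfz)
  have key : ∀ᵐ ω ∂μ, ω ∉ R := by
    filter_upwards [hae, hf0, ae_dSeq_pos hφ u] with ω h1 h2 h3 hmem
    have hpos := h3 (hRB ω hmem) K
    have hle : dSeq φ u K ω ≤ 0 := (h2 hmem) ▸ h1 hmem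
    exact absurd (le_antisymm hle zero_le) hpos.ne'
  exact hR0 (measure_eq_zero_iff_ae_notMem.mpr key)

end Aux5
section Aux6
open MeasureTheory Filter Topology ENNReal
variable {Ω X : Type*} [MeasurableSpace Ω] [NormedAddCommGroup X] [NormedSpace ℝ X]
variable {μ : Measure Ω} {φ : Ω → X → ℝ≥0∞}

lemma exists_chunk (hφ : IsOrliczIntegrand μ φ)
    (hΔ2 : ∀ A : Set Ω, MemAaSigma μ A → ∀ S : Set X, TopologicalSpace.IsSeparable S →
      ∃ (k : ℝ) (f : Ω → ℝ≥0∞), 1 ≤ k ∧ Measurable f ∧ (∫⁻ ω, f ω ∂μ) < ⊤ ∧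
        ∀ᵐ ω ∂μ, ω ∈ A → ∀ x ∈ S,
          φ ω ((2 : ℝ) • x) ≤ ENNReal.ofReal k * φ ω x + f ω)
    {u : Ω → X} (hu : StronglyMeasurable u) {B' : Set Ω} (hB'm : MeasurableSet B')
    (hB'B : ∀ ω ∈ B', φ ω (u ω) = 0 ∧ u ω ≠ 0)
    (hH : ∀ S, SigmaFinSet μ S → μ (B' \ S) ≠ 0)
    (c : ℝ≥0∞) (hc : c ≠ ⊤) :
    ∃ E, MeasurableSet E ∧ E ⊆ B' ∧ c ≤ μ E ∧ μ E < ⊤ := by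
  set s := ⨆ E : {E : Set Ω // MeasurableSet E ∧ E ⊆ B' ∧ μ E < ⊤}, μ (E : Set Ω) with hs
  rcases eq_or_ne s ⊤ with hstop | hstop
  · have : c < s := hstop ▸ hc.lt_top
    obtain ⟨⟨E, hE⟩, hcE⟩ := lt_iSup_iff.mp this
    exact ⟨E, hE.1, hE.2.1, hcE.le, hE.2.2⟩
  · exfalso
    have hEx : ∀ n : ℕ, ∃ E : {E : Set Ω // MeasurableSet E ∧ E ⊆ B' ∧ μ E < ⊤},
        s ≤ μ (E : Set Ω) + ((n : ℝ≥0∞) + 1)⁻¹ := by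
      intro n
      by_cases hsn : s ≤ ((n : ℝ≥0∞) + 1)⁻¹
      · exact ⟨⟨∅, MeasurableSet.empty, Set.empty_subset _, by simp⟩, by simpa using hsn⟩
      · push_neg at hsn
        have hlt : s - ((n : ℝ≥0∞) + 1)⁻¹ < s :=
          ENNReal.sub_lt_self hstop (lt_of_le_of_lt zero_le hsn).ne' (ENNReal.inv_ne_zero.mpr (by simp))
        obtain ⟨E, hE⟩ := lt_iSup_iff.mp hlt
        refine ⟨E, ?_⟩
        have := (ENNReal.sub_lt_iff_lt_right (by simp) hsn.le).mp hE
        exact this.le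
    choose Eseq hEseq using hEx
    set T := ⋃ n, (Eseq n : Set Ω) with hT
    have hTsf : SigmaFinSet μ T :=
      ⟨fun n => (Eseq n : Set Ω), rfl, fun n => ⟨(Eseq n).2.1, (Eseq n).2.2.2⟩⟩
    set R := B' \ T with hR
    have hR0 : μ R ≠ 0 := hH T hTsf
    apply hR0
    apply weird_null hφ hΔ2 hu (hB'm.diff hTsf.measurableSet)
      (fun ω hω => hB'B ω hω.1)
    intro F hF hFm
    rcases eq_or_ne (μ F) ⊤ with h | h
    · exact Or.inr h
    · left
      have key : ∀ n : ℕ, μ F ≤ ((n : ℝ≥0∞) + 1)⁻¹ := by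
        intro n
        have hdisj : Disjoint F (Eseq n : Set Ω) :=
          Set.disjoint_sdiff_left.mono hF (Set.subset_iUnion (fun m => (Eseq m : Set Ω)) n)
        have hmem : MeasurableSet (F ∪ Eseq n) ∧ (F ∪ (Eseq n : Set Ω)) ⊆ B' ∧
            μ (F ∪ (Eseq n : Set Ω)) < ⊤ := by
          refine ⟨hFm.union (Eseq n).2.1,
            Set.union_subset (hF.trans Set.diff_subset) (Eseq n).2.2.1, ?_⟩
          exact lt_of_le_of_lt (measure_union_le _ _)
            (ENNReal.add_lt_top.mpr ⟨h.lt_top, (Eseq n).2.2.2⟩)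
        have h1 : μ F + μ (Eseq n : Set Ω) ≤ s := by
          have := le_iSup (fun E : {E : Set Ω // MeasurableSet E ∧ E ⊆ B' ∧ μ E < ⊤} =>
            μ (E : Set Ω)) ⟨F ∪ (Eseq n : Set Ω), hmem⟩
          rw [← measure_union hdisj (Eseq n).2.1]
          exact this
        have h2 : μ F ≤ s - μ (Eseq n : Set Ω) := ENNReal.le_sub_of_add_le_right (Eseq n).2.2.2.ne h1
        have h3 : s - μ (Eseq n : Set Ω) ≤ ((n : ℝ≥0∞) + 1)⁻¹ := by
          rw [tsub_le_iff_right, add_comm]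
          exact hEseq n
        exact h2.trans h3
      by_contra h0
      obtain ⟨m, hm⟩ := ENNReal.exists_inv_nat_lt h0
      exact absurd ((key m).trans (ENNReal.inv_le_inv.mpr
        (le_add_of_nonneg_right zero_le_one))) hm.not_ge

end Aux6
/-- Simple iteration helper. -/
def natChain {α : Type*} (f : ℕ → α → α) (z : α) : ℕ → α
  | 0 => z
  | i + 1 => f i (natChain f z i)

section Aux7
open MeasureTheory Filter Topology ENNReal Set
variable {Ω X : Type*} [MeasurableSpace Ω] [NormedAddCommGroup X] [NormedSpace ℝ X]
variable {μ : Measure Ω} {φ : Ω → X → ℝ≥0∞}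

lemma sfc_B (hφ : IsOrliczIntegrand μ φ)
    (hΔ2 : ∀ A : Set Ω, MemAaSigma μ A → ∀ S : Set X, TopologicalSpace.IsSeparable S →
      ∃ (k : ℝ) (f : Ω → ℝ≥0∞), 1 ≤ k ∧ Measurable f ∧ (∫⁻ ω, f ω ∂μ) < ⊤ ∧
        ∀ᵐ ω ∂μ, ω ∈ A → ∀ x ∈ S,
          φ ω ((2 : ℝ) • x) ≤ ENNReal.ofReal k * φ ω x + f ω)
    {u : Ω → X} (hu : StronglyMeasurable u) :
    ∃ S, SigmaFinSet μ S ∧ μ ({ω | φ ω (u ω) = 0 ∧ u ω ≠ 0} \ S) = 0 := by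
  set B := {ω | φ ω (u ω) = 0 ∧ u ω ≠ 0} with hBdef
  have hBm : MeasurableSet B := by
    have h1 : MeasurableSet {ω | φ ω (u ω) = 0} :=
      (hφ.meas_comp u hu) (measurableSet_singleton 0)
    have h2 : MeasurableSet {ω | u ω ≠ 0} := by
      have : {ω | u ω ≠ 0} = (fun ω => ‖u ω‖) ⁻¹' ({0}ᶜ) := by
        ext ω; simp [norm_eq_zero]
      rw [this]
      exact hu.norm.measurable (measurableSet_singleton 0).compl
    exact h1.inter h2
  by_contra hcon
  push_neg at hcon
  have hH : ∀ S, SigmaFinSet μ S → μ (B \ S) ≠ 0 := hcon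
  -- the a.e. positivity set
  have haepos := ae_dSeq_pos hφ u
  have hN0 : μ {ω | ¬((φ ω (u ω) = 0 ∧ u ω ≠ 0) → ∀ k : ℕ, 0 < dSeq φ u k ω)} = 0 :=
    ae_iff.mp haepos
  -- choose levels n i
  have hGex : ∀ i : ℕ, ∃ n : ℕ, ∀ S, SigmaFinSet μ S →
      μ ((B ∩ {ω | ((n : ℝ≥0∞) + 1)⁻¹ ≤ dSeq φ u i ω}) \ S) ≠ 0 := by
    intro i
    by_contra hno
    push_neg at hno
    choose Sn hSn hSn0 using hno
    apply hH _ (sigmaFinSet_iUnion hSn)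
    apply measure_mono_null (?_ :
      B \ (⋃ n, Sn n) ⊆ {ω | ¬((φ ω (u ω) = 0 ∧ u ω ≠ 0) → ∀ k : ℕ, 0 < dSeq φ u k ω)} ∪
        ⋃ n : ℕ, ((B ∩ {ω | ((n : ℝ≥0∞) + 1)⁻¹ ≤ dSeq φ u i ω}) \ Sn n))
    · exact measure_union_null hN0 (measure_iUnion_null hSn0)
    · rintro ω ⟨hωB, hωS⟩
      by_cases hgood : (φ ω (u ω) = 0 ∧ u ω ≠ 0) → ∀ k : ℕ, 0 < dSeq φ u k ω
      · right
        have hpos : 0 < dSeq φ u i ω := hgood hωB i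
        obtain ⟨m, hm⟩ := ENNReal.exists_inv_nat_lt hpos.ne'
        have hm' : ((m : ℝ≥0∞) + 1)⁻¹ ≤ dSeq φ u i ω :=
          (ENNReal.inv_le_inv.mpr (le_add_of_nonneg_right zero_le_one)).trans hm.le
        refine Set.mem_iUnion.mpr ⟨m, ⟨hωB, hm'⟩, fun hc => hωS (Set.mem_iUnion.mpr ⟨m, hc⟩)⟩
      · exact Or.inl hgood
  choose nfun hnfun using hGex
  set G : ℕ → Set Ω := fun i => B ∩ {ω | ((nfun i : ℝ≥0∞) + 1)⁻¹ ≤ dSeq φ u i ω} with hGdef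
  have hGm : ∀ i, MeasurableSet (G i) := fun i =>
    hBm.inter ((dSeq_measurable hφ hu i) measurableSet_Ici)
  -- step existence
  have hstep : ∀ (i : ℕ) (T : Set Ω), ∃ E, SigmaFinSet μ T →
      MeasurableSet E ∧ E ⊆ G i \ T ∧ ((nfun i : ℝ≥0∞) + 1) ≤ μ E ∧ μ E < ⊤ := by
    intro i T
    by_cases hT : SigmaFinSet μ T
    · have hH' : ∀ S, SigmaFinSet μ S → μ ((G i \ T) \ S) ≠ 0 := by
        intro S hS
        rw [Set.diff_diff]
        exact hnfun i (T ∪ S) (hT.union hS)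
      obtain ⟨E, h1, h2, h3, h4⟩ := exists_chunk hφ hΔ2 hu ((hGm i).diff hT.measurableSet)
        (fun ω hω => hω.1.1) hH' ((nfun i : ℝ≥0∞) + 1) (by simp)
      exact ⟨E, fun _ => ⟨h1, (Set.subset_diff.mpr ⟨h2.trans Set.diff_subset,
        (Set.disjoint_sdiff_left.mono_left h2 : _)⟩ : E ⊆ G i \ T), h3, h4⟩⟩
    · exact ⟨∅, fun h => absurd h hT⟩
  choose pick hpick using hstep
  set chainT : ℕ → Set Ω := natChain (fun i T => T ∪ pick i T) ∅ with hchainT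
  have chainS : ∀ i, chainT (i + 1) = chainT i ∪ pick i (chainT i) := fun i => rfl
  have hchainSF : ∀ i, SigmaFinSet μ (chainT i) := by
    intro i
    induction i with
    | zero => exact sigmaFinSet_empty
    | succ m ih =>
        rw [chainS m]
        obtain ⟨h1, _, _, h4⟩ := hpick m (chainT m) ih
        exact ih.union (sigmaFinSet_of_finite h1 h4)
  set E : ℕ → Set Ω := fun i => pick i (chainT i) with hEdef
  have hEprop : ∀ i, MeasurableSet (E i) ∧ E i ⊆ G i \ chainT i ∧
      ((nfun i : ℝ≥0∞) + 1) ≤ μ (E i) ∧ μ (E i) < ⊤ := fun i => hpick i _ (hchainSF i)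
  have hmono : ∀ i j, i ≤ j → chainT i ⊆ chainT j := by
    intro i j hij
    induction hij with
    | refl => exact subset_rfl
    | @step m hm ih => exact ih.trans (by rw [chainS m]; exact Set.subset_union_left)
  have hEsub : ∀ i, E i ⊆ chainT (i + 1) := by
    intro i; rw [chainS i]; exact Set.subset_union_right
  have hdisj : Pairwise (Function.onFun Disjoint E) := by
    have key : ∀ i j, i < j → Disjoint (E i) (E j) := by
      intro i j hij
      have h1 : E i ⊆ chainT j := (hEsub i).trans (hmono _ _ hij)
      have h2 : E j ⊆ (chainT j)ᶜ := fun ω hω => ((hEprop j).2.1 hω).2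
      exact Set.disjoint_of_subset h1 h2 disjoint_compl_right
    intro i j hne
    rcases hne.lt_or_gt with h | h
    · exact key i j h
    · exact (key j i h).symm
  obtain ⟨K, f, hfm, hfi, hfae⟩ := dSeq_bound hφ hΔ2 hu (⋃ i, E i)
    ⟨E, rfl, fun i => ⟨(hEprop i).1, Or.inl (hEprop i).2.2.2⟩⟩
  have hone : ∀ m : ℕ, 1 ≤ ∫⁻ ω in E (K + m), f ω ∂μ := by
    intro m
    have hsub : ∀ᵐ ω ∂μ, ω ∈ E (K + m) → ((nfun (K + m) : ℝ≥0∞) + 1)⁻¹ ≤ f ω := by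
      filter_upwards [hfae] with ω h1 hω
      have hωA : ω ∈ ⋃ i, E i := Set.mem_iUnion.mpr ⟨K + m, hω⟩
      have hωG : ω ∈ G (K + m) := ((hEprop (K + m)).2.1 hω).1
      exact hωG.2.trans ((dSeq_antitone (Nat.le_add_right K m) ω).trans (h1 hωA))
    calc (1 : ℝ≥0∞) = ((nfun (K + m) : ℝ≥0∞) + 1)⁻¹ * ((nfun (K + m) : ℝ≥0∞) + 1) :=
          (ENNReal.inv_mul_cancel (by simp) (by simp)).symm
    _ ≤ ((nfun (K + m) : ℝ≥0∞) + 1)⁻¹ * μ (E (K + m)) := by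
        gcongr
        exact (hEprop (K + m)).2.2.1
    _ = ∫⁻ _ in E (K + m), ((nfun (K + m) : ℝ≥0∞) + 1)⁻¹ ∂μ := by
        rw [setLIntegral_const, mul_comm]
    _ ≤ ∫⁻ ω in E (K + m), f ω ∂μ :=
        setLIntegral_mono_ae hfm.aemeasurable.restrict hsub
  have htop : (⊤ : ℝ≥0∞) ≤ ∫⁻ ω, f ω ∂μ := by
    calc (⊤ : ℝ≥0∞) = ∑' _ : ℕ, (1 : ℝ≥0∞) :=
          (ENNReal.tsum_const_eq_top_of_ne_zero one_ne_zero).symm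
    _ ≤ ∑' m : ℕ, ∫⁻ ω in E (K + m), f ω ∂μ := ENNReal.tsum_le_tsum hone
    _ = ∫⁻ ω in ⋃ m, E (K + m), f ω ∂μ :=
        (lintegral_iUnion (fun m => (hEprop (K + m)).1)
          (fun m m' hmm => hdisj (fun hc => hmm (by omega))) f).symm
    _ ≤ ∫⁻ ω, f ω ∂μ := setLIntegral_le_lintegral _ _
  exact absurd (lt_of_lt_of_le hfi htop) (lt_irrefl _)

lemma sfc_main (hφ : IsOrliczIntegrand μ φ)
    (hΔ2 : ∀ A : Set Ω, MemAaSigma μ A → ∀ S : Set X, TopologicalSpace.IsSeparable S →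
      ∃ (k : ℝ) (f : Ω → ℝ≥0∞), 1 ≤ k ∧ Measurable f ∧ (∫⁻ ω, f ω ∂μ) < ⊤ ∧
        ∀ᵐ ω ∂μ, ω ∈ A → ∀ x ∈ S,
          φ ω ((2 : ℝ) • x) ≤ ENNReal.ofReal k * φ ω x + f ω)
    {u : Ω → X} (hu : StronglyMeasurable u) (hM : orliczModular μ φ u < ⊤) :
    ∃ S, SigmaFinSet μ S ∧ ∀ᵐ ω ∂μ, ω ∉ S → u ω = 0 := by
  obtain ⟨S₀, hS₀, hB0⟩ := sfc_B hφ hΔ2 hu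
  set N : ℕ → Set Ω := fun n => {ω | ((n : ℝ≥0∞) + 1)⁻¹ ≤ φ ω (u ω)} with hNdef
  have hNm : ∀ n, MeasurableSet (N n) := fun n => (hφ.meas_comp u hu) measurableSet_Ici
  have hNfin : ∀ n, μ (N n) < ⊤ := by
    intro n
    have h1 : ((n : ℝ≥0∞) + 1)⁻¹ * μ (N n) ≤ ∫⁻ ω, φ ω (u ω) ∂μ :=
      mul_meas_ge_le_lintegral (hφ.meas_comp u hu) _
    by_contra htop
    push_neg at htop
    rw [top_le_iff.mp htop, ENNReal.mul_top (ENNReal.inv_ne_zero.mpr (by simp))] at h1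
    exact absurd (top_le_iff.mp h1) (by simpa [orliczModular] using hM.ne)
  refine ⟨S₀ ∪ ⋃ n, N n,
    hS₀.union (sigmaFinSet_iUnion fun n => sigmaFinSet_of_finite (hNm n) (hNfin n)), ?_⟩
  rw [ae_iff]
  apply measure_mono_null (?_ : _ ⊆ {ω | φ ω (u ω) = 0 ∧ u ω ≠ 0} \ S₀) hB0
  intro ω hω
  simp only [Set.mem_setOf_eq, _root_.not_imp] at hω
  obtain ⟨hωS, hωu⟩ := hω
  have hων : ω ∉ S₀ := fun hc => hωS (Set.mem_union_left _ hc)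
  have hωN : ∀ n : ℕ, ¬ ((n : ℝ≥0∞) + 1)⁻¹ ≤ φ ω (u ω) := by
    intro n hc
    exact hωS (Set.mem_union_right _ (Set.mem_iUnion.mpr ⟨n, hc⟩))
  have hφ0 : φ ω (u ω) = 0 := by
    by_contra h0
    obtain ⟨m, hm⟩ := ENNReal.exists_inv_nat_lt h0
    exact hωN m ((ENNReal.inv_le_inv.mpr (le_add_of_nonneg_right zero_le_one)).trans hm.le)
  exact ⟨⟨hφ0, hωu⟩, hων⟩

end Aux7
section Aux8
open MeasureTheory Filter Topology ENNReal
variable {Ω X : Type*} [MeasurableSpace Ω] [NormedAddCommGroup X] [NormedSpace ℝ X]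
variable {μ : Measure Ω} {φ : Ω → X → ℝ≥0∞}

lemma modular_double (hφ : IsOrliczIntegrand μ φ)
    (hΔ2 : ∀ A : Set Ω, MemAaSigma μ A → ∀ S : Set X, TopologicalSpace.IsSeparable S →
      ∃ (k : ℝ) (f : Ω → ℝ≥0∞), 1 ≤ k ∧ Measurable f ∧ (∫⁻ ω, f ω ∂μ) < ⊤ ∧
        ∀ᵐ ω ∂μ, ω ∈ A → ∀ x ∈ S,
          φ ω ((2 : ℝ) • x) ≤ ENNReal.ofReal k * φ ω x + f ω)
    {u : Ω → X} (hu : StronglyMeasurable u) (hM : orliczModular μ φ u < ⊤) :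
    orliczModular μ φ (fun ω => (2 : ℝ) • u ω) < ⊤ := by
  obtain ⟨S, hSsf, hSae⟩ := sfc_main hφ hΔ2 hu hM
  obtain ⟨k, f, hk1, hfm, hfi, hb⟩ := hΔ2 S hSsf.memAaSigma (Set.range u) hu.isSeparable_range
  have hbound : ∀ᵐ ω ∂μ, φ ω ((2 : ℝ) • u ω) ≤ ENNReal.ofReal k * φ ω (u ω) + f ω := by
    filter_upwards [hb, hSae, ae_phi_zero hφ] with ω h1 h2 h3
    by_cases hω : ω ∈ S
    · exact h1 hω (u ω) (Set.mem_range_self ω)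
    · rw [h2 hω, smul_zero, h3]
      exact zero_le
  have hmeas := hφ.meas_comp u hu
  calc orliczModular μ φ (fun ω => (2 : ℝ) • u ω)
      ≤ ∫⁻ ω, (ENNReal.ofReal k * φ ω (u ω) + f ω) ∂μ := lintegral_mono_ae hbound
  _ = ENNReal.ofReal k * orliczModular μ φ u + ∫⁻ ω, f ω ∂μ := by
      rw [lintegral_add_left (hmeas.const_mul _), lintegral_const_mul _ hmeas]
      rfl
  _ < ⊤ := ENNReal.add_lt_top.mpr
      ⟨ENNReal.mul_lt_top ENNReal.ofReal_lt_top hM, hfi⟩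

lemma modular_pow2 (hφ : IsOrliczIntegrand μ φ)
    (hΔ2 : ∀ A : Set Ω, MemAaSigma μ A → ∀ S : Set X, TopologicalSpace.IsSeparable S →
      ∃ (k : ℝ) (f : Ω → ℝ≥0∞), 1 ≤ k ∧ Measurable f ∧ (∫⁻ ω, f ω ∂μ) < ⊤ ∧
        ∀ᵐ ω ∂μ, ω ∈ A → ∀ x ∈ S,
          φ ω ((2 : ℝ) • x) ≤ ENNReal.ofReal k * φ ω x + f ω)
    {u : Ω → X} (hu : StronglyMeasurable u) (hM : orliczModular μ φ u < ⊤) (m : ℕ) :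
    orliczModular μ φ (fun ω => ((2 : ℝ) ^ m) • u ω) < ⊤ := by
  induction m with
  | zero => simpa [orliczModular] using hM
  | succ n ih =>
      have h2 := modular_double hφ hΔ2 (hu.const_smul ((2 : ℝ) ^ n)) ih
      have heq : (fun ω => ((2 : ℝ) ^ (n + 1)) • u ω)
          = fun ω => (2 : ℝ) • (((2 : ℝ) ^ n) • u ω) := by
        funext ω
        rw [smul_smul, ← pow_succ']
      rw [heq]
      exact h2

lemma modular_smul (hφ : IsOrliczIntegrand μ φ)
    (hΔ2 : ∀ A : Set Ω, MemAaSigma μ A → ∀ S : Set X, TopologicalSpace.IsSeparable S →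
      ∃ (k : ℝ) (f : Ω → ℝ≥0∞), 1 ≤ k ∧ Measurable f ∧ (∫⁻ ω, f ω ∂μ) < ⊤ ∧
        ∀ᵐ ω ∂μ, ω ∈ A → ∀ x ∈ S,
          φ ω ((2 : ℝ) • x) ≤ ENNReal.ofReal k * φ ω x + f ω)
    {u : Ω → X} (hu : StronglyMeasurable u) (hM : orliczModular μ φ u < ⊤) (c : ℝ) :
    orliczModular μ φ (fun ω => c • u ω) < ⊤ := by
  obtain ⟨m, hm⟩ : ∃ m : ℕ, |c| ≤ 2 ^ m := by
    obtain ⟨m, hm⟩ := pow_unbounded_of_one_lt |c| one_lt_two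
    exact ⟨m, hm.le⟩
  have hpow := modular_pow2 hφ hΔ2 hu hM m
  have hae : ∀ᵐ ω ∂μ, φ ω (c • u ω) ≤ φ ω (((2 : ℝ) ^ m) • u ω) := by
    filter_upwards [ae_phi_contract hφ] with ω h
    have hne : ((2 : ℝ) ^ m) ≠ 0 := by positivity
    have heq : c • u ω = (c / 2 ^ m) • (((2 : ℝ) ^ m) • u ω) := by
      rw [smul_smul, div_mul_cancel₀ _ hne]
    rw [heq]
    apply h
    rw [abs_div, abs_of_pos (by positivity : (0:ℝ) < 2 ^ m)]
    rw [div_le_one (by positivity)]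
    exact hm
  exact lt_of_le_of_lt (lintegral_mono_ae hae) hpow

lemma modular_add (hφ : IsOrliczIntegrand μ φ)
    (hΔ2 : ∀ A : Set Ω, MemAaSigma μ A → ∀ S : Set X, TopologicalSpace.IsSeparable S →
      ∃ (k : ℝ) (f : Ω → ℝ≥0∞), 1 ≤ k ∧ Measurable f ∧ (∫⁻ ω, f ω ∂μ) < ⊤ ∧
        ∀ᵐ ω ∂μ, ω ∈ A → ∀ x ∈ S,
          φ ω ((2 : ℝ) • x) ≤ ENNReal.ofReal k * φ ω x + f ω)
    {u v : Ω → X} (hu : StronglyMeasurable u) (hv : StronglyMeasurable v)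
    (hMu : orliczModular μ φ u < ⊤) (hMv : orliczModular μ φ v < ⊤) :
    orliczModular μ φ (u + v) < ⊤ := by
  set w := fun ω => (1 / 2 : ℝ) • u ω + (1 / 2 : ℝ) • v ω with hwdef
  have hw : StronglyMeasurable w := (hu.const_smul ((1:ℝ)/2)).add (hv.const_smul ((1:ℝ)/2))
  have hMw : orliczModular μ φ w < ⊤ := by
    have hae : ∀ᵐ ω ∂μ, φ ω (w ω) ≤
        ENNReal.ofReal (1/2) * φ ω (u ω) + ENNReal.ofReal (1/2) * φ ω (v ω) := by
      filter_upwards [hφ.ae_convex] with ω h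
      exact h (u ω) (v ω) (1/2) (1/2) (by norm_num) (by norm_num) (by norm_num)
    have hmu := hφ.meas_comp u hu
    have hmv := hφ.meas_comp v hv
    calc orliczModular μ φ w
        ≤ ∫⁻ ω, (ENNReal.ofReal (1/2) * φ ω (u ω) + ENNReal.ofReal (1/2) * φ ω (v ω)) ∂μ :=
          lintegral_mono_ae hae
    _ = ENNReal.ofReal (1/2) * orliczModular μ φ u
        + ENNReal.ofReal (1/2) * orliczModular μ φ v := by
        rw [lintegral_add_left (hmu.const_mul _), lintegral_const_mul _ hmu,
          lintegral_const_mul _ hmv]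
        rfl
    _ < ⊤ := ENNReal.add_lt_top.mpr
        ⟨ENNReal.mul_lt_top ENNReal.ofReal_lt_top hMu,
         ENNReal.mul_lt_top ENNReal.ofReal_lt_top hMv⟩
  have h2 := modular_double hφ hΔ2 hw hMw
  have heq : (fun ω => (2 : ℝ) • w ω) = u + v := by
    funext ω
    show (2 : ℝ) • ((1 / 2 : ℝ) • u ω + (1 / 2 : ℝ) • v ω) = u ω + v ω
    rw [smul_add, smul_smul, smul_smul]
    norm_num
  rwa [heq] at h2

end Aux8
section Aux9
open MeasureTheory Filter Topology ENNReal
variable {Ω X : Type*} [MeasurableSpace Ω] [NormedAddCommGroup X] [NormedSpace ℝ X]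
variable {μ : Measure Ω} {φ : Ω → X → ℝ≥0∞}

lemma luxNorm_exists_scale {u : Ω → X} (h : luxNorm μ φ u < ⊤) :
    ∃ a : ℝ, 0 < a ∧ orliczModular μ φ (fun ω => a⁻¹ • u ω) ≤ 1 := by
  by_contra hno
  push_neg at hno
  have hempty : IsEmpty {a : ℝ // 0 < a ∧ orliczModular μ φ (fun ω => a⁻¹ • u ω) ≤ 1} :=
    ⟨fun ⟨a, ha1, ha2⟩ => absurd ha2 (hno a ha1).not_ge⟩
  have : luxNorm μ φ u = ⊤ := by
    rw [luxNorm]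
    exact @iInf_of_empty _ _ _ hempty _
  exact absurd this h.ne

end Aux9

/-- If the Orlicz integrand `φ` satisfies the `Δ₂`-condition, then
`dom I_φ` is linear, and consequently `L_φ(μ) = C_φ^σ(μ)`. -/
theorem delta2_implies_linear_domain {Ω X : Type*} [MeasurableSpace Ω]
    [NormedAddCommGroup X] [NormedSpace ℝ X]
    (μ : Measure Ω) (φ : Ω → X → ℝ≥0∞) (hφ : IsOrliczIntegrand μ φ)
    (hΔ2 : ∀ A : Set Ω, MemAaSigma μ A → ∀ S : Set X, TopologicalSpace.IsSeparable S →
      ∃ (k : ℝ) (f : Ω → ℝ≥0∞), 1 ≤ k ∧ Measurable f ∧ (∫⁻ ω, f ω ∂μ) < ⊤ ∧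
        ∀ᵐ ω ∂μ, ω ∈ A → ∀ x ∈ S,
          φ ω ((2 : ℝ) • x) ≤ ENNReal.ofReal k * φ ω x + f ω) :
    (∀ u v : Ω → X,
      MemOrlicz μ φ u ∧ orliczModular μ φ u < ⊤ →
      MemOrlicz μ φ v ∧ orliczModular μ φ v < ⊤ →
      orliczModular μ φ (u + v) < ⊤) ∧
    (∀ (c : ℝ) (u : Ω → X),
      MemOrlicz μ φ u ∧ orliczModular μ φ u < ⊤ →
      orliczModular μ φ (c • u) < ⊤) ∧
    (∀ u : Ω → X, MemOrlicz μ φ u → AbsContNorm μ φ u ∧ SigmaFiniteConc μ u) := by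
  refine ⟨?_, ?_, ?_⟩
  · rintro u v ⟨⟨hu, _⟩, hMu⟩ ⟨⟨hv, _⟩, hMv⟩
    exact modular_add hφ hΔ2 hu hv hMu hMv
  · rintro c u ⟨⟨hu, _⟩, hMu⟩
    exact modular_smul hφ hΔ2 hu hMu c
  · rintro u ⟨hu, hlux⟩
    obtain ⟨a, ha, hMw⟩ := luxNorm_exists_scale hlux
    set w := fun ω => a⁻¹ • u ω with hwdef
    have hw : StronglyMeasurable w := hu.const_smul a⁻¹
    have hMw' : orliczModular μ φ w < ⊤ := hMw.trans_lt ENNReal.one_lt_top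
    constructor
    · -- absolutely continuous norm
      intro E hEm hEae
      rw [ENNReal.tendsto_atTop_zero]
      intro ε hε
      set εr : ℝ := if _he : ε = ⊤ then 1 else ε.toReal with hεrdef
      have hεr0 : 0 < εr := by
        rw [hεrdef]
        split
        · exact one_pos
        · next hne => exact ENNReal.toReal_pos hε.ne' hne
      have hεrle : ENNReal.ofReal εr ≤ ε := by
        rw [hεrdef]
        split
        · next he => exact he ▸ le_top
        · next hne => rw [ENNReal.ofReal_toReal hne]
      have hMc : orliczModular μ φ (fun ω => εr⁻¹ • u ω) < ⊤ := by
        have h1 := modular_smul hφ hΔ2 hw hMw' (εr⁻¹ * a)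
        have heq : (fun ω => (εr⁻¹ * a) • w ω) = fun ω => εr⁻¹ • u ω := by
          funext ω
          rw [hwdef, smul_smul, mul_assoc, mul_inv_cancel₀ ha.ne', mul_one]
        rwa [heq] at h1
      have hconv : Tendsto (fun n => ∫⁻ ω, φ ω (εr⁻¹ • (E n).indicator u ω) ∂μ)
          atTop (𝓝 0) := by
        have h0 : (0 : ℝ≥0∞) = ∫⁻ _, (0 : ℝ≥0∞) ∂μ := lintegral_zero.symm
        rw [h0]
        apply tendsto_lintegral_of_dominated_convergence
          (bound := fun ω => φ ω (εr⁻¹ • u ω))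
        · intro n
          exact hφ.meas_comp _ ((hu.indicator (hEm n)).const_smul εr⁻¹)
        · intro n
          filter_upwards [ae_phi_zero hφ] with ω h2
          by_cases hω : ω ∈ E n
          · rw [Set.indicator_of_mem hω]
          · rw [Set.indicator_of_notMem hω, smul_zero, h2]
            exact zero_le
        · exact hMc.ne
        · filter_upwards [hEae, ae_phi_zero hφ] with ω h1 h2
          have hev : (fun n => φ ω (εr⁻¹ • (E n).indicator u ω)) =ᶠ[atTop]
              (fun _ => (0 : ℝ≥0∞)) := by
            filter_upwards [h1] with n hn
            rw [Set.indicator_of_notMem hn, smul_zero, h2]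
          exact Tendsto.congr' hev.symm tendsto_const_nhds
      obtain ⟨N, hN⟩ := ENNReal.tendsto_atTop_zero.mp hconv 1 zero_lt_one
      refine ⟨N, fun n hn => ?_⟩
      have hle : luxNorm μ φ ((E n).indicator u) ≤ ENNReal.ofReal εr := by
        rw [luxNorm]
        exact iInf_le
          (fun a : {a : ℝ // 0 < a ∧
              orliczModular μ φ (fun ω => a⁻¹ • ((E n).indicator u) ω) ≤ 1} =>
            ENNReal.ofReal (a : ℝ)) ⟨εr, hεr0, hN n hn⟩
      exact hle.trans hεrle
    · -- σ-finite concentration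
      obtain ⟨S, hSsf, hSae⟩ := sfc_main hφ hΔ2 hw hMw'
      refine ⟨S, hSsf.measurableSet, hSsf, ?_⟩
      filter_upwards [hSae] with ω h1 h2
      have := h1 h2
      rw [hwdef] at this
      simpa [inv_eq_zero, ha.ne'] using (smul_eq_zero.mp this)
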